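/- Let σ ≥ −1, T > 0 and let A, B : [0,T] × ℝ² → ℂ be measurable with sup_{0≤t≤T} ‖A(t)‖_{X⁰}, sup_{0≤t≤T} ‖B(t)‖_{X⁰}, ∫₀^T ‖A(t)‖_{X^{σ+1}} dt and ∫₀^T ‖B(t)‖_{X^{σ+1}} dt all finite. Define Q(t,ξ) := ∫₀^t e^{−(t−z)|ξ|} N[A,B](z,ξ) dz. Then sup_{0≤t≤T} ∫_{ℝ²} |ξ|^σ |Q(t,ξ)| dξ ≤ 2^{σ+1} [ (sup_{0≤t≤T} ‖A(t)‖_{X⁰}) ∫₀^T ‖B(t)‖_{X^{σ+1}} dt + (∫₀^T ‖A(t)‖_{X^{σ+1}} dt)(sup_{0≤t≤T} ‖B(t)‖_{X⁰}) ]. -/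

import Mathlib

set_option maxHeartbeats 2000000


open MeasureTheory Filter
open scoped ENNReal NNReal

noncomputable section

abbrev E2 : Type := EuclideanSpace ℝ (Fin 2)

/-- `X^σ`-type norm of a time slice: `∫ |ξ|^σ |Θ(t,ξ)| dξ` (valued in `ℝ≥0∞`). -/
def Xnorm (σ : ℝ) (g : E2 → ℂ) : ℝ≥0∞ :=
  ∫⁻ ξ : E2, ENNReal.ofReal (‖ξ‖ ^ σ) * ‖g ξ‖₊

/-- Bilinear quasi-geostrophic term `N[A,B]` on the Fourier side:
the Fourier transform of `-div(b u_a)`. -/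
def QGB (A B : ℝ → E2 → ℂ) (z : ℝ) (ξ : E2) : ℂ :=
  ∫ η : E2, (((ξ 0 * η 1 - ξ 1 * η 0) / ‖η‖ : ℝ) : ℂ) * A z η * B z (ξ - η)

/-- `(a+b)^p ≤ 2^p (a^p + b^p)` for nonnegative reals and `p ≥ 0`. -/
lemma aux_two_rpow {p a b : ℝ} (hp : 0 ≤ p) (ha : 0 ≤ a) (hb : 0 ≤ b) :
    (a + b) ^ p ≤ 2 ^ p * (a ^ p + b ^ p) := by
  have key : ∀ x y : ℝ, 0 ≤ x → 0 ≤ y → x ≤ y →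
      (x + y) ^ p ≤ 2 ^ p * (x ^ p + y ^ p) := by
    intro x y hx hy hxy
    have h1 : 0 ≤ x ^ p := Real.rpow_nonneg hx p
    have h2 : (0:ℝ) ≤ 2 ^ p := Real.rpow_nonneg (by norm_num) p
    calc (x + y) ^ p ≤ (2 * y) ^ p :=
          Real.rpow_le_rpow (by linarith) (by linarith) hp
      _ = 2 ^ p * y ^ p := Real.mul_rpow (by norm_num) hy
      _ ≤ 2 ^ p * (x ^ p + y ^ p) := by nlinarith
  rcases le_total a b with h | h
  · exact key a b ha hb h
  · calc (a + b) ^ p = (b + a) ^ p := by rw [add_comm]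
      _ ≤ 2 ^ p * (b ^ p + a ^ p) := key b a hb ha h
      _ = 2 ^ p * (a ^ p + b ^ p) := by ring

lemma aux_cross (ξ η : E2) : |ξ 0 * η 1 - ξ 1 * η 0| ≤ ‖ξ‖ * ‖η‖ := by
  have hξ : ‖ξ‖ = Real.sqrt (ξ 0 ^ 2 + ξ 1 ^ 2) := by
    rw [EuclideanSpace.norm_eq]
    simp [Fin.sum_univ_two, Real.norm_eq_abs, sq_abs]
  have hη : ‖η‖ = Real.sqrt (η 0 ^ 2 + η 1 ^ 2) := by
    rw [EuclideanSpace.norm_eq]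
    simp [Fin.sum_univ_two, Real.norm_eq_abs, sq_abs]
  rw [hξ, hη, ← Real.sqrt_mul (by positivity), ← Real.sqrt_sq_eq_abs]
  apply Real.sqrt_le_sqrt
  nlinarith [sq_nonneg (ξ 0 * η 0 + ξ 1 * η 1)]

lemma aux_cross_div (ξ η : E2) : |(ξ 0 * η 1 - ξ 1 * η 0) / ‖η‖| ≤ ‖ξ‖ := by
  rcases eq_or_ne η 0 with h | h
  · subst h
    simp
  · have hn : 0 < ‖η‖ := norm_pos_iff.mpr h
    rw [abs_div, abs_of_pos hn, div_le_iff₀ hn]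
    exact aux_cross ξ η

lemma Xnorm_eq_rpow {q : ℝ} (hq : 0 ≤ q) (g : E2 → ℂ) :
    Xnorm q g = ∫⁻ ξ : E2, (‖ξ‖₊ : ℝ≥0∞) ^ q * ‖g ξ‖₊ :=
  lintegral_congr fun ξ => by
    rw [← ENNReal.ofReal_rpow_of_nonneg (norm_nonneg _) hq, ofReal_norm, enorm_eq_nnnorm]

lemma Xnorm_zero_eq (g : E2 → ℂ) : Xnorm 0 g = ∫⁻ ξ : E2, (‖g ξ‖₊ : ℝ≥0∞) := by
  rw [Xnorm_eq_rpow le_rfl g]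
  simp

def Kker (p : ℝ) (A B : ℝ → E2 → ℂ) (z : ℝ) (ξ η : E2) : ℝ≥0∞ :=
  ((‖η‖₊ : ℝ≥0∞) ^ p * ‖A z η‖₊) * ‖B z (ξ - η)‖₊ +
    (‖A z η‖₊ : ℝ≥0∞) * ((‖ξ - η‖₊ : ℝ≥0∞) ^ p * ‖B z (ξ - η)‖₊)

lemma measurable_Kker (p : ℝ) {A B : ℝ → E2 → ℂ}
    (hA : Measurable (Function.uncurry A)) (hB : Measurable (Function.uncurry B)) :
    Measurable fun q : ℝ × E2 × E2 => Kker p A B q.1 q.2.1 q.2.2 := by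
  unfold Kker
  have m1 : Measurable fun q : ℝ × E2 × E2 => ((‖q.2.2‖₊ : ℝ≥0∞)) ^ p :=
    ENNReal.continuous_rpow_const.measurable.comp measurable_snd.snd.enorm
  have mAq : Measurable fun q : ℝ × E2 × E2 => (‖A q.1 q.2.2‖₊ : ℝ≥0∞) :=
    (hA.comp (measurable_fst.prodMk measurable_snd.snd)).enorm
  have mBq : Measurable fun q : ℝ × E2 × E2 => (‖B q.1 (q.2.1 - q.2.2)‖₊ : ℝ≥0∞) :=
    (hB.comp (measurable_fst.prodMk (measurable_snd.fst.sub measurable_snd.snd))).enorm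
  have m2 : Measurable fun q : ℝ × E2 × E2 => ((‖q.2.1 - q.2.2‖₊ : ℝ≥0∞)) ^ p :=
    ENNReal.continuous_rpow_const.measurable.comp
      (measurable_snd.fst.sub measurable_snd.snd).enorm
  exact ((m1.mul mAq).mul mBq).add (mAq.mul (m2.mul mBq))

/-- Lemma 2.7, `L^∞_T(X^σ)` part: bound for the bilinear Duhamel term
`Q(t,ξ) = ∫₀^t e^{-(t-z)|ξ|} N[A,B](z,ξ) dz`. -/
theorem bilinear_duhamel_sup_bound (σ : ℝ) (hσ : -1 ≤ σ) (T : ℝ) (hT : 0 < T)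
    (A B : ℝ → E2 → ℂ)
    (hA : Measurable (Function.uncurry A)) (hB : Measurable (Function.uncurry B))
    (hA0 : (⨆ t ∈ Set.Icc (0:ℝ) T, Xnorm 0 (A t)) < ⊤)
    (hB0 : (⨆ t ∈ Set.Icc (0:ℝ) T, Xnorm 0 (B t)) < ⊤)
    (hA1 : (∫⁻ t in Set.Icc (0:ℝ) T, Xnorm (σ + 1) (A t)) < ⊤)
    (hB1 : (∫⁻ t in Set.Icc (0:ℝ) T, Xnorm (σ + 1) (B t)) < ⊤) :
    (⨆ t ∈ Set.Icc (0:ℝ) T, ∫⁻ ξ : E2, ENNReal.ofReal (‖ξ‖ ^ σ) *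
        ‖∫ z in (0:ℝ)..t, ((Real.exp (-((t - z) * ‖ξ‖)) : ℝ) : ℂ) * QGB A B z ξ‖₊)
      ≤ (2 : ℝ≥0∞) ^ (σ + 1) *
        ((⨆ t ∈ Set.Icc (0:ℝ) T, Xnorm 0 (A t)) *
            (∫⁻ t in Set.Icc (0:ℝ) T, Xnorm (σ + 1) (B t)) +
          (∫⁻ t in Set.Icc (0:ℝ) T, Xnorm (σ + 1) (A t)) *
            (⨆ t ∈ Set.Icc (0:ℝ) T, Xnorm 0 (B t))) := by
  set p := σ + 1 with hp_def
  have hp : 0 ≤ p := by simp only [hp_def]; linarith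
  have h2top : ((2:ℝ≥0∞) ^ p) ≠ ⊤ :=
    (ENNReal.rpow_lt_top_of_nonneg hp (by norm_num)).ne
  have mAz : ∀ z, Measurable (A z) := fun z => hA.comp measurable_prodMk_left
  have mBz : ∀ z, Measurable (B z) := fun z => hB.comp measurable_prodMk_left
  set K : ℝ → E2 → E2 → ℝ≥0∞ := Kker p A B with hK_def
  -- pointwise key inequality
  have key : ∀ (z : ℝ) (ξ η : E2),
      ENNReal.ofReal (‖ξ‖ ^ σ) *
          (ENNReal.ofReal |(ξ 0 * η 1 - ξ 1 * η 0) / ‖η‖| *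
            ((‖A z η‖₊ : ℝ≥0∞) * ‖B z (ξ - η)‖₊))
        ≤ (2:ℝ≥0∞) ^ p * K z ξ η := by
    intro z ξ η
    have h1 : ENNReal.ofReal (‖ξ‖ ^ σ) * ENNReal.ofReal |(ξ 0 * η 1 - ξ 1 * η 0) / ‖η‖|
        ≤ (2:ℝ≥0∞) ^ p * ((‖η‖₊ : ℝ≥0∞) ^ p + (‖ξ - η‖₊ : ℝ≥0∞) ^ p) := by
      rw [← ENNReal.ofReal_mul (Real.rpow_nonneg (norm_nonneg _) _)]
      have hstep : ‖ξ‖ ^ σ * |(ξ 0 * η 1 - ξ 1 * η 0) / ‖η‖| ≤ ‖ξ‖ ^ p := by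
        rcases eq_or_ne ξ 0 with h | h
        · subst h
          simp [Real.rpow_nonneg]
        · have hξp : 0 < ‖ξ‖ := norm_pos_iff.mpr h
          calc ‖ξ‖ ^ σ * |(ξ 0 * η 1 - ξ 1 * η 0) / ‖η‖| ≤ ‖ξ‖ ^ σ * ‖ξ‖ :=
                mul_le_mul_of_nonneg_left (aux_cross_div ξ η)
                  (Real.rpow_nonneg (norm_nonneg _) _)
            _ = ‖ξ‖ ^ p := (Real.rpow_add_one hξp.ne' σ).symm
      refine le_trans (ENNReal.ofReal_le_ofReal hstep) ?_
      have h2 : ‖ξ‖ ^ p ≤ 2 ^ p * (‖η‖ ^ p + ‖ξ - η‖ ^ p) := by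
        have hle : ‖ξ‖ ≤ ‖η‖ + ‖ξ - η‖ := by
          have := norm_add_le η (ξ - η)
          simpa using this
        calc ‖ξ‖ ^ p ≤ (‖η‖ + ‖ξ - η‖) ^ p :=
              Real.rpow_le_rpow (norm_nonneg _) hle hp
          _ ≤ 2 ^ p * (‖η‖ ^ p + ‖ξ - η‖ ^ p) :=
              aux_two_rpow hp (norm_nonneg _) (norm_nonneg _)
      refine le_trans (ENNReal.ofReal_le_ofReal h2) ?_
      rw [ENNReal.ofReal_mul (by positivity),
        ENNReal.ofReal_add (by positivity) (by positivity),
        ← ENNReal.ofReal_rpow_of_nonneg (by norm_num : (0:ℝ) ≤ 2) hp,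
        ← ENNReal.ofReal_rpow_of_nonneg (norm_nonneg η) hp,
        ← ENNReal.ofReal_rpow_of_nonneg (norm_nonneg (ξ - η)) hp,
        ENNReal.ofReal_ofNat, ofReal_norm, ofReal_norm, enorm_eq_nnnorm, enorm_eq_nnnorm]
    calc ENNReal.ofReal (‖ξ‖ ^ σ) *
          (ENNReal.ofReal |(ξ 0 * η 1 - ξ 1 * η 0) / ‖η‖| *
            ((‖A z η‖₊ : ℝ≥0∞) * ‖B z (ξ - η)‖₊))
        = (ENNReal.ofReal (‖ξ‖ ^ σ) * ENNReal.ofReal |(ξ 0 * η 1 - ξ 1 * η 0) / ‖η‖|) *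
            ((‖A z η‖₊ : ℝ≥0∞) * ‖B z (ξ - η)‖₊) := by ring
      _ ≤ ((2:ℝ≥0∞) ^ p * ((‖η‖₊ : ℝ≥0∞) ^ p + (‖ξ - η‖₊ : ℝ≥0∞) ^ p)) *
            ((‖A z η‖₊ : ℝ≥0∞) * ‖B z (ξ - η)‖₊) := mul_le_mul_left h1 _
      _ = (2:ℝ≥0∞) ^ p * K z ξ η := by rw [hK_def]; unfold Kker; ring
  -- Step 1: pointwise-in-ξ bound for the Duhamel term
  have step1 : ∀ t ∈ Set.Icc (0:ℝ) T, ∀ ξ : E2,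
      ENNReal.ofReal (‖ξ‖ ^ σ) *
          ‖∫ z in (0:ℝ)..t, ((Real.exp (-((t - z) * ‖ξ‖)) : ℝ) : ℂ) * QGB A B z ξ‖₊
        ≤ (2:ℝ≥0∞) ^ p * ∫⁻ z in Set.Icc (0:ℝ) T, ∫⁻ η, K z ξ η := by
    intro t ht ξ
    have hQ1 : (‖∫ z in (0:ℝ)..t,
        ((Real.exp (-((t - z) * ‖ξ‖)) : ℝ) : ℂ) * QGB A B z ξ‖₊ : ℝ≥0∞)
        ≤ ∫⁻ z in Set.Ioc (0:ℝ) t, (‖QGB A B z ξ‖₊ : ℝ≥0∞) := by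
      rw [intervalIntegral.integral_of_le ht.1]
      refine le_trans (enorm_integral_le_lintegral_enorm _) ?_
      refine setLIntegral_mono' measurableSet_Ioc fun z hz => ?_
      have hexp : (‖((Real.exp (-((t - z) * ‖ξ‖)) : ℝ) : ℂ)‖₊ : ℝ≥0∞) ≤ 1 := by
        rw [← enorm_eq_nnnorm, ← ofReal_norm, Complex.norm_real, Real.norm_eq_abs,
          abs_of_pos (Real.exp_pos _)]
        refine ENNReal.ofReal_le_one.mpr (Real.exp_le_one_iff.mpr ?_)
        have h1 : 0 ≤ (t - z) * ‖ξ‖ := mul_nonneg (by linarith [hz.2]) (norm_nonneg _)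
        linarith
      calc (‖((Real.exp (-((t - z) * ‖ξ‖)) : ℝ) : ℂ) * QGB A B z ξ‖₊ : ℝ≥0∞)
          = (‖((Real.exp (-((t - z) * ‖ξ‖)) : ℝ) : ℂ)‖₊ : ℝ≥0∞) * ‖QGB A B z ξ‖₊ := by
            rw [nnnorm_mul, ENNReal.coe_mul]
        _ ≤ 1 * ‖QGB A B z ξ‖₊ := mul_le_mul_left hexp _
        _ = ‖QGB A B z ξ‖₊ := one_mul _
    have hQ2 : ∀ z : ℝ, (‖QGB A B z ξ‖₊ : ℝ≥0∞) ≤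
        ∫⁻ η, ENNReal.ofReal |(ξ 0 * η 1 - ξ 1 * η 0) / ‖η‖| *
          ((‖A z η‖₊ : ℝ≥0∞) * ‖B z (ξ - η)‖₊) := by
      intro z
      refine le_trans (enorm_integral_le_lintegral_enorm _) (lintegral_mono fun η => ?_)
      have : (‖(((ξ 0 * η 1 - ξ 1 * η 0) / ‖η‖ : ℝ) : ℂ) * A z η * B z (ξ - η)‖₊ : ℝ≥0∞)
          = ENNReal.ofReal |(ξ 0 * η 1 - ξ 1 * η 0) / ‖η‖| *
            ((‖A z η‖₊ : ℝ≥0∞) * ‖B z (ξ - η)‖₊) := by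
        rw [nnnorm_mul, nnnorm_mul, ENNReal.coe_mul, ENNReal.coe_mul,
          ← enorm_eq_nnnorm, ← ofReal_norm (((ξ 0 * η 1 - ξ 1 * η 0) / ‖η‖ : ℝ) : ℂ),
          Complex.norm_real, Real.norm_eq_abs, mul_assoc]
      exact this.le
    calc ENNReal.ofReal (‖ξ‖ ^ σ) *
          ‖∫ z in (0:ℝ)..t, ((Real.exp (-((t - z) * ‖ξ‖)) : ℝ) : ℂ) * QGB A B z ξ‖₊
        ≤ ENNReal.ofReal (‖ξ‖ ^ σ) *
            ∫⁻ z in Set.Ioc (0:ℝ) t, (‖QGB A B z ξ‖₊ : ℝ≥0∞) := mul_le_mul_right hQ1 _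
      _ ≤ ENNReal.ofReal (‖ξ‖ ^ σ) * ∫⁻ z in Set.Ioc (0:ℝ) t,
            ∫⁻ η, ENNReal.ofReal |(ξ 0 * η 1 - ξ 1 * η 0) / ‖η‖| *
              ((‖A z η‖₊ : ℝ≥0∞) * ‖B z (ξ - η)‖₊) :=
          mul_le_mul_right (lintegral_mono fun z => hQ2 z) _
      _ = ∫⁻ z in Set.Ioc (0:ℝ) t, ENNReal.ofReal (‖ξ‖ ^ σ) *
            ∫⁻ η, ENNReal.ofReal |(ξ 0 * η 1 - ξ 1 * η 0) / ‖η‖| *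
              ((‖A z η‖₊ : ℝ≥0∞) * ‖B z (ξ - η)‖₊) :=
          (lintegral_const_mul' _ _ ENNReal.ofReal_ne_top).symm
      _ = ∫⁻ z in Set.Ioc (0:ℝ) t,
            ∫⁻ η, ENNReal.ofReal (‖ξ‖ ^ σ) *
              (ENNReal.ofReal |(ξ 0 * η 1 - ξ 1 * η 0) / ‖η‖| *
                ((‖A z η‖₊ : ℝ≥0∞) * ‖B z (ξ - η)‖₊)) :=
          lintegral_congr fun z => (lintegral_const_mul' _ _ ENNReal.ofReal_ne_top).symm
      _ ≤ ∫⁻ z in Set.Ioc (0:ℝ) t, ∫⁻ η, (2:ℝ≥0∞) ^ p * K z ξ η :=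
          lintegral_mono fun z => lintegral_mono fun η => key z ξ η
      _ ≤ ∫⁻ z in Set.Icc (0:ℝ) T, ∫⁻ η, (2:ℝ≥0∞) ^ p * K z ξ η := by
          refine lintegral_mono' (Measure.restrict_mono (fun z hz => ?_) le_rfl) le_rfl
          exact ⟨hz.1.le, hz.2.trans ht.2⟩
      _ = (2:ℝ≥0∞) ^ p * ∫⁻ z in Set.Icc (0:ℝ) T, ∫⁻ η, K z ξ η := by
          rw [← lintegral_const_mul' _ _ h2top]
          exact lintegral_congr fun z => lintegral_const_mul' _ _ h2top
  -- Step 2: bound the kernel triple integral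
  have step2 : (∫⁻ ξ : E2, ∫⁻ z in Set.Icc (0:ℝ) T, ∫⁻ η, K z ξ η)
      ≤ (⨆ t ∈ Set.Icc (0:ℝ) T, Xnorm 0 (A t)) *
          (∫⁻ t in Set.Icc (0:ℝ) T, Xnorm p (B t)) +
        (∫⁻ t in Set.Icc (0:ℝ) T, Xnorm p (A t)) *
          (⨆ t ∈ Set.Icc (0:ℝ) T, Xnorm 0 (B t)) := by
    have hmeas2 : Measurable (Function.uncurry fun (ξ : E2) (z : ℝ) => ∫⁻ η, K z ξ η) := by
      rw [hK_def]
      have h : Measurable fun q : (E2 × ℝ) × E2 => Kker p A B q.1.2 q.1.1 q.2 :=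
        Measurable.comp (g := fun q : ℝ × E2 × E2 => Kker p A B q.1 q.2.1 q.2.2)
          (f := fun q : (E2 × ℝ) × E2 => (q.1.2, q.1.1, q.2)) (measurable_Kker p hA hB)
          (measurable_fst.snd.prodMk (measurable_fst.fst.prodMk measurable_snd))
      exact Measurable.lintegral_prod_right (f := fun (q : E2 × ℝ) η => Kker p A B q.2 q.1 η) h
    rw [lintegral_lintegral_swap hmeas2.aemeasurable]
    have hz_eq : ∀ z : ℝ, (∫⁻ ξ : E2, ∫⁻ η, K z ξ η)
        = Xnorm p (A z) * Xnorm 0 (B z) + Xnorm 0 (A z) * Xnorm p (B z) := by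
      intro z
      have hmeasz : Measurable (Function.uncurry fun (ξ η : E2) => K z ξ η) := by
        rw [hK_def]
        exact Measurable.comp (g := fun q : ℝ × E2 × E2 => Kker p A B q.1 q.2.1 q.2.2)
          (f := fun q : E2 × E2 => (z, q.1, q.2)) (measurable_Kker p hA hB)
          (measurable_const.prodMk (measurable_fst.prodMk measurable_snd))
      rw [lintegral_lintegral_swap hmeasz.aemeasurable]
      have hinner : ∀ η : E2, (∫⁻ ξ : E2, K z ξ η)
          = ((‖η‖₊ : ℝ≥0∞) ^ p * ‖A z η‖₊) * Xnorm 0 (B z)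
            + (‖A z η‖₊ : ℝ≥0∞) * Xnorm p (B z) := by
        intro η
        have hBtrans : (∫⁻ ξ : E2, (‖B z (ξ - η)‖₊ : ℝ≥0∞)) = Xnorm 0 (B z) := by
          rw [Xnorm_zero_eq]
          exact (measurePreserving_sub_right volume η).lintegral_comp (mBz z).enorm
        have hBtransp : (∫⁻ ξ : E2, (‖ξ - η‖₊ : ℝ≥0∞) ^ p * ‖B z (ξ - η)‖₊)
            = Xnorm p (B z) := by
          rw [Xnorm_eq_rpow hp]
          exact (measurePreserving_sub_right volume η).lintegral_comp
            ((ENNReal.continuous_rpow_const.measurable.comp measurable_enorm).mul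
              (mBz z).enorm)
        have hmB : Measurable fun ξ : E2 => (‖B z (ξ - η)‖₊ : ℝ≥0∞) :=
          ((mBz z).comp (measurable_id.sub measurable_const)).enorm
        calc (∫⁻ ξ : E2, K z ξ η)
            = (∫⁻ ξ : E2, ((‖η‖₊ : ℝ≥0∞) ^ p * ‖A z η‖₊) * ‖B z (ξ - η)‖₊)
              + ∫⁻ ξ : E2, (‖A z η‖₊ : ℝ≥0∞) * ((‖ξ - η‖₊ : ℝ≥0∞) ^ p * ‖B z (ξ - η)‖₊) := by
              rw [hK_def]
              unfold Kker
              exact lintegral_add_left (by exact measurable_const.mul hmB) _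
          _ = ((‖η‖₊ : ℝ≥0∞) ^ p * ‖A z η‖₊) * Xnorm 0 (B z)
              + (‖A z η‖₊ : ℝ≥0∞) * Xnorm p (B z) := by
              rw [lintegral_const_mul' _ _
                  (ENNReal.mul_ne_top (ENNReal.rpow_lt_top_of_nonneg hp
                    ENNReal.coe_ne_top).ne ENNReal.coe_ne_top),
                lintegral_const_mul' _ _ ENNReal.coe_ne_top, hBtrans, hBtransp]
      rw [lintegral_congr hinner]
      have hmA1 : Measurable fun η : E2 => (‖η‖₊ : ℝ≥0∞) ^ p * (‖A z η‖₊ : ℝ≥0∞) :=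
        (ENNReal.continuous_rpow_const.measurable.comp measurable_enorm).mul (mAz z).enorm
      rw [lintegral_add_left (hmA1.mul_const _)]
      rw [lintegral_mul_const _ hmA1, lintegral_mul_const (f := fun η => (‖A z η‖₊ : ℝ≥0∞)) _ (mAz z).enorm,
        ← Xnorm_eq_rpow hp, ← Xnorm_zero_eq]
    rw [lintegral_congr hz_eq]
    have mXpA : Measurable fun z : ℝ => Xnorm p (A z) := by
      simp only [Xnorm_eq_rpow hp]
      exact Measurable.lintegral_prod_right
        (f := fun (z : ℝ) (η : E2) => (‖η‖₊ : ℝ≥0∞) ^ p * ‖A z η‖₊)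
        ((ENNReal.continuous_rpow_const.measurable.comp measurable_snd.enorm).mul hA.enorm)
    calc (∫⁻ z in Set.Icc (0:ℝ) T,
            (Xnorm p (A z) * Xnorm 0 (B z) + Xnorm 0 (A z) * Xnorm p (B z)))
        ≤ ∫⁻ z in Set.Icc (0:ℝ) T,
            (Xnorm p (A z) * (⨆ t ∈ Set.Icc (0:ℝ) T, Xnorm 0 (B t))
              + (⨆ t ∈ Set.Icc (0:ℝ) T, Xnorm 0 (A t)) * Xnorm p (B z)) := by
          refine setLIntegral_mono' measurableSet_Icc fun z hz => ?_
          exact add_le_add (mul_le_mul_right (le_iSup₂ (f := fun t _ => Xnorm 0 (B t)) z hz) _)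
            (mul_le_mul_left (le_iSup₂ (f := fun t _ => Xnorm 0 (A t)) z hz) _)
      _ = (∫⁻ z in Set.Icc (0:ℝ) T, Xnorm p (A z)) *
            (⨆ t ∈ Set.Icc (0:ℝ) T, Xnorm 0 (B t))
          + (⨆ t ∈ Set.Icc (0:ℝ) T, Xnorm 0 (A t)) *
            (∫⁻ z in Set.Icc (0:ℝ) T, Xnorm p (B z)) := by
          rw [lintegral_add_left (mXpA.mul_const _),
            lintegral_mul_const' _ _ hB0.ne, lintegral_const_mul' _ _ hA0.ne]
      _ = _ := by ring
  -- assemble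
  refine iSup₂_le fun t ht => ?_
  calc (∫⁻ ξ : E2, ENNReal.ofReal (‖ξ‖ ^ σ) *
        ‖∫ z in (0:ℝ)..t, ((Real.exp (-((t - z) * ‖ξ‖)) : ℝ) : ℂ) * QGB A B z ξ‖₊)
      ≤ ∫⁻ ξ : E2, (2:ℝ≥0∞) ^ p * ∫⁻ z in Set.Icc (0:ℝ) T, ∫⁻ η, K z ξ η :=
        lintegral_mono fun ξ => step1 t ht ξ
    _ = (2:ℝ≥0∞) ^ p * ∫⁻ ξ : E2, ∫⁻ z in Set.Icc (0:ℝ) T, ∫⁻ η, K z ξ η :=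
        lintegral_const_mul' _ _ h2top
    _ ≤ _ := mul_le_mul_right step2 _

end
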